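/- Let 1 < q₁ < q₂ < ∞. Then there exists a log-Hölder continuous function p : [0,2π] → [q₁,q₂] with p(0) = p(2π) such that for every constant q with q₁ ≤ q ≤ q₂, the set {F : 𝔻 → ℂ analytic : sup_{0≤r<1} ∫₀^{2π} |F(re^{iθ})|^{p(θ)} dθ < ∞} is not equal to the set {F : 𝔻 → ℂ analytic : sup_{0≤r<1} ∫₀^{2π} |F(re^{iθ})|^{q} dθ < ∞}. -/

import Mathlib

open MeasureTheory Complex
open scoped ENNReal Real

namespace Stmt13Aux

lemma abs_sq (r θ : ℝ) :
    ‖1 - (r:ℂ) * Complex.exp (θ * I)‖ ^ 2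
      = (1 - r)^2 + 2*r*(1 - Real.cos θ) := by
  rw [Complex.sq_norm]
  simp only [Complex.normSq_apply, Complex.exp_ofReal_mul_I_re, Complex.exp_ofReal_mul_I_im,
    Complex.sub_re, Complex.sub_im, Complex.one_re, Complex.one_im, Complex.mul_re, Complex.mul_im,
    Complex.ofReal_re, Complex.ofReal_im]
  linear_combination (r^2) * (Real.sin_sq_add_cos_sq θ)

lemma abs_rexp (r θ : ℝ) (hr0 : 0 ≤ r) :
    ‖(r:ℂ) * Complex.exp (θ * I)‖ = r := by
  rw [norm_mul, Complex.norm_exp_ofReal_mul_I, Complex.norm_real, Real.norm_eq_abs, _root_.abs_of_nonneg hr0, mul_one]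

lemma abs_lower (r θ : ℝ) (hr0 : 0 ≤ r) (hr1 : r ≤ 1) :
    |Real.sin (θ/2)| / 2 ≤ ‖1 - (r:ℂ) * Complex.exp (θ * I)‖ := by
  have hsin : |Real.sin (θ/2)| ≤ 1 := abs_le.2 ⟨Real.neg_one_le_sin _, Real.sin_le_one _⟩
  rcases le_or_gt r (1/2) with h | h
  · have h1 : (1:ℝ) - r ≤ ‖1 - (r:ℂ) * Complex.exp (θ * I)‖ := by
      have := norm_sub_norm_le (1:ℂ) ((r:ℂ) * Complex.exp (θ * I))
      rwa [norm_one, abs_rexp r θ hr0] at this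
    linarith
  · have hsq : (|Real.sin (θ/2)| / 2)^2 ≤ ‖1 - (r:ℂ) * Complex.exp (θ * I)‖ ^ 2 := by
      rw [abs_sq r θ]
      have hs : Real.sin (θ/2)^2 = (1 - Real.cos θ)/2 := by
        have := Real.sin_sq_eq_half_sub (θ/2)
        rw [mul_div_cancel₀ θ (two_ne_zero)] at this
        linarith
      have h3 : (0:ℝ) ≤ 1 - Real.cos θ := by nlinarith [Real.cos_le_one θ]
      have h4 : (|Real.sin (θ/2)| / 2)^2 = (1 - Real.cos θ)/8 := by
        rw [div_pow, _root_.sq_abs, hs]; ring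
      nlinarith
    have h0 : (0:ℝ) ≤ ‖1 - (r:ℂ) * Complex.exp (θ * I)‖ := norm_nonneg _
    nlinarith [abs_nonneg (Real.sin (θ/2))]

lemma abs_lower_pos (r θ : ℝ) (hr0 : 0 ≤ r) (hr1 : r < 1) :
    (1:ℝ) - r ≤ ‖1 - (r:ℂ) * Complex.exp (θ * I)‖ := by
  have := norm_sub_norm_le (1:ℂ) ((r:ℂ) * Complex.exp (θ * I))
  rwa [norm_one, abs_rexp r θ hr0] at this

lemma abs_upper (r θ : ℝ) (hr0 : 0 ≤ r) (hr1 : r ≤ 1) :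
    ‖1 - (r:ℂ) * Complex.exp (θ * I)‖ ≤ (1 - r) + 2 * |Real.sin (θ/2)| := by
  have key : 1 - (r:ℂ) * Complex.exp (θ * I)
      = ((1:ℂ) - r) + (r:ℂ) * (1 - Complex.exp (θ * I)) := by ring
  have h1 : ‖(1:ℂ) - (r:ℝ)‖ = 1 - r := by
    rw [show ((1:ℂ) - (r:ℝ)) = ((1 - r : ℝ) : ℂ) by push_cast; ring, Complex.norm_real, Real.norm_eq_abs,
      _root_.abs_of_nonneg (by linarith)]
  have h2 : ‖1 - Complex.exp (θ * I)‖ = 2 * |Real.sin (θ/2)| := by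
    have hsq : ‖1 - Complex.exp (θ * I)‖ ^ 2 = (2*|Real.sin (θ/2)|)^2 := by
      have h := abs_sq 1 θ
      simp only [Complex.ofReal_one, one_mul] at h
      have hs : Real.sin (θ/2)^2 = (1 - Real.cos θ)/2 := by
        have := Real.sin_sq_eq_half_sub (θ/2)
        rw [mul_div_cancel₀ θ (two_ne_zero)] at this
        linarith
      rw [h, mul_pow, _root_.sq_abs, hs]; ring
    have h0 : (0:ℝ) ≤ ‖1 - Complex.exp (θ * I)‖ := norm_nonneg _
    have h0' : (0:ℝ) ≤ 2*|Real.sin (θ/2)| := by positivity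
    rw [← Real.sqrt_sq h0, ← Real.sqrt_sq h0', hsq]
  calc ‖1 - (r:ℂ) * Complex.exp (θ * I)‖
      ≤ ‖(1:ℂ) - (r:ℝ)‖ + ‖(r:ℂ) * (1 - Complex.exp (θ * I))‖ := by
        rw [key]; exact norm_add_le _ _
    _ ≤ (1 - r) + 2 * |Real.sin (θ/2)| := by
        rw [h1, norm_mul, Complex.norm_real, Real.norm_eq_abs, _root_.abs_of_nonneg hr0]
        have := norm_nonneg (1 - Complex.exp (θ * I))
        nlinarith [h2]



lemma sin_ge_min (θ : ℝ) (h0 : 0 ≤ θ) (h2 : θ ≤ 2*π) :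
    min θ (2*π - θ) / π ≤ |Real.sin (θ/2)| := by
  have hπ := Real.pi_pos
  have key : 2/π * min (θ/2) (π - θ/2) ≤ Real.sin (θ/2) := by
    rcases le_or_gt (θ/2) (π/2) with h | h
    · have : min (θ/2) (π - θ/2) = θ/2 := min_eq_left (by linarith)
      rw [this]; exact Real.mul_le_sin (by linarith) h
    · have hmin : min (θ/2) (π - θ/2) = π - θ/2 := min_eq_right (by linarith)
      rw [hmin, ← Real.sin_pi_sub]
      exact Real.mul_le_sin (by linarith) (by linarith)
  have heq : min θ (2*π - θ) / π = 2/π * min (θ/2) (π - θ/2) := by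
    rcases le_total θ (2*π - θ) with h | h
    · rw [min_eq_left h, min_eq_left (by linarith)]; ring
    · rw [min_eq_right h, min_eq_right (by linarith)]; ring
  rw [heq]
  exact key.trans (le_abs_self _)

lemma sin_shift_pi (θ : ℝ) : Real.sin ((θ+π)/2) = Real.sin ((π-θ)/2) := by
  have h1 : (θ+π)/2 = θ/2 + π/2 := by ring
  have h2 : (π-θ)/2 = π/2 - θ/2 := by ring
  rw [h1, h2, Real.sin_add_pi_div_two, Real.sin_pi_div_two_sub]

lemma sin_ge_dist_pi (θ : ℝ) (h0 : 0 ≤ θ) (h2 : θ ≤ 2*π) :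
    |θ - π| / π ≤ |Real.sin ((θ+π)/2)| := by
  have hπ := Real.pi_pos
  rw [sin_shift_pi]
  have habs : |(π - θ)/2| ≤ π/2 := by
    rw [abs_div, _root_.abs_two]
    have : |π - θ| ≤ π := abs_le.2 ⟨by linarith, by linarith⟩
    linarith
  have := Real.mul_abs_le_abs_sin habs
  have heq : 2/π * |(π-θ)/2| = |θ - π|/π := by
    rw [abs_div, _root_.abs_two, abs_sub_comm]
    field_simp
  linarith [heq ▸ this]

lemma sin_half_le (θ : ℝ) : |Real.sin (θ/2)| ≤ |θ|/2 := by
  have := Real.abs_sin_le_abs (x := θ/2)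
  rwa [abs_div, _root_.abs_two] at this

noncomputable def Fc (c φ : ℝ) : ℂ → ℂ :=
  fun z => (1 - Complex.exp ((φ:ℂ) * I) * z) ^ (-(c:ℂ))

lemma Fc_diff (c φ : ℝ) : DifferentiableOn ℂ (Fc c φ) (Metric.ball 0 1) := by
  intro z hz
  apply DifferentiableAt.differentiableWithinAt
  have hz1 : ‖z‖ < 1 := by simpa [Metric.mem_ball, Complex.dist_eq] using hz
  have hslit : (1 - Complex.exp ((φ:ℂ) * I) * z) ∈ Complex.slitPlane := by
    rw [Complex.mem_slitPlane_iff]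
    left
    have habs : ‖Complex.exp ((φ:ℂ) * I) * z‖ = ‖z‖ := by
      rw [norm_mul, Complex.norm_exp_ofReal_mul_I, one_mul]
    have hre : (Complex.exp ((φ:ℂ) * I) * z).re ≤ ‖z‖ := by
      rw [← habs]; exact Complex.re_le_norm _
    simp only [Complex.sub_re, Complex.one_re]
    linarith
  exact ((differentiableAt_const _).sub ((differentiableAt_const _).mul differentiableAt_id)).cpow
    (differentiableAt_const _) hslit

lemma exp_shift (φ r θ : ℝ) :
    Complex.exp ((φ:ℂ) * I) * ((r:ℂ) * Complex.exp ((θ:ℂ) * I))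
      = (r:ℂ) * Complex.exp (((θ+φ:ℝ):ℂ) * I) := by
  push_cast
  rw [add_mul, Complex.exp_add]
  ring

lemma Fc_abs (c φ r θ : ℝ) (hr0 : 0 ≤ r) (hr1 : r < 1) :
    ‖Fc c φ ((r:ℂ) * Complex.exp ((θ:ℂ) * I))‖
      = ‖1 - (r:ℂ) * Complex.exp (((θ+φ:ℝ):ℂ) * I)‖ ^ (-c) := by
  unfold Fc
  rw [exp_shift]
  set w : ℂ := 1 - (r:ℂ) * Complex.exp (((θ+φ:ℝ):ℂ) * I) with hw
  have hpos : 0 < ‖w‖ := by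
    have := abs_lower_pos r (θ+φ) hr0 hr1
    calc (0:ℝ) < 1 - r := by linarith
      _ ≤ _ := this
  have hne : w ≠ 0 := fun h => by simp [h] at hpos
  rw [Complex.norm_cpow_of_ne_zero hne]
  simp [Complex.neg_im, Complex.ofReal_im, Complex.neg_re, Complex.ofReal_re]



lemma ae_ne_restrict (t : ℝ) (S : Set ℝ) :
    ∀ᵐ θ ∂(volume.restrict S), θ ≠ t := by
  rw [Filter.eventually_iff, mem_ae_iff]
  have : {θ : ℝ | θ ≠ t}ᶜ = {t} := by ext x; simp [not_not]
  rw [this]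
  exact le_antisymm ((Measure.restrict_apply_le _ _).trans (by simp)) zero_le

lemma intOn_abs_rpow (s t : ℝ) (hs : s < 1) :
    IntegrableOn (fun θ : ℝ => |θ - t| ^ (-s)) (Set.Ioc 0 (2*π)) := by
  have hπ := Real.pi_pos
  have hexp : (-1:ℝ) < -s := by linarith
  have hplus : IntegrableOn (fun θ : ℝ => (θ - t) ^ (-s)) (Set.Ioc 0 (2*π)) := by
    have h := (intervalIntegral.intervalIntegrable_rpow' (a := -t) (b := 2*π - t) hexp).comp_sub_right t
    rw [intervalIntegrable_iff] at h
    simpa using h.mono_set (by rw [Set.uIoc_of_le (by linarith : (-t) + t ≤ 2*π - t + t)]; norm_num)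
  have hminus : IntegrableOn (fun θ : ℝ => (t - θ) ^ (-s)) (Set.Ioc 0 (2*π)) := by
    have h := (intervalIntegral.intervalIntegrable_rpow' (a := t) (b := t - 2*π) hexp).comp_sub_left t
    rw [intervalIntegrable_iff] at h
    simpa using h.mono_set (by rw [show t - (t - 2*π) = 2*π by ring, show t - t = (0:ℝ) by ring,
      Set.uIoc_of_le (by linarith : (0:ℝ) ≤ 2*π)])
  have hg : IntegrableOn (fun θ : ℝ => max ((θ - t) ^ (-s)) ((t - θ) ^ (-s))) (Set.Ioc 0 (2*π)) :=
    hplus.sup hminus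
  apply Integrable.mono' hg
  · apply Measurable.aestronglyMeasurable
    fun_prop
  · refine Filter.Eventually.of_forall (fun θ => ?_)
    rw [Real.norm_eq_abs, _root_.abs_of_nonneg (Real.rpow_nonneg (abs_nonneg _) _)]
    rcases le_total t θ with h | h
    · rw [_root_.abs_of_nonneg (by linarith)]
      exact le_max_left _ _
    · rw [_root_.abs_of_nonpos (by linarith), neg_sub]
      exact le_max_right _ _

lemma lint_fin (s t C : ℝ) (hs : s < 1) (hC : 0 ≤ C) :
    ∫⁻ θ in Set.Ioc (0:ℝ) (2*π), ENNReal.ofReal (C * |θ - t| ^ (-s)) < ⊤ := by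
  have hint : IntegrableOn (fun θ : ℝ => C * |θ - t| ^ (-s)) (Set.Ioc 0 (2*π)) :=
    (intOn_abs_rpow s t hs).const_mul C
  have := hint.hasFiniteIntegral
  rwa [hasFiniteIntegral_iff_ofReal] at this
  exact Filter.Eventually.of_forall fun θ => by positivity

lemma div_aux (S : ℝ≥0∞) (ε₀ c₁ s : ℝ) (hε₀ : 0 < ε₀) (hc₁ : 0 < c₁) (hs : 1 < s)
    (h : ∀ ε : ℝ, 0 < ε → ε ≤ ε₀ → ENNReal.ofReal (c₁ * ε ^ (1 - s)) ≤ S) : S = ⊤ := by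
  by_contra hne
  set M := S.toReal with hM
  have hM0 : 0 ≤ M := ENNReal.toReal_nonneg
  have hSM : S = ENNReal.ofReal M := (ENNReal.ofReal_toReal hne).symm
  set β : ℝ := c₁ / (M + 1) with hβ
  have hβ0 : 0 < β := by positivity
  set ε : ℝ := min ε₀ (β ^ (1/(s-1))) with hε
  have hε0 : 0 < ε := lt_min hε₀ (Real.rpow_pos_of_pos hβ0 _)
  have hεs : ε ^ (s-1) ≤ β := by
    calc ε ^ (s-1) ≤ (β ^ (1/(s-1))) ^ (s-1) :=
          Real.rpow_le_rpow hε0.le (min_le_right _ _) (by linarith)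
      _ = β := by
          rw [← Real.rpow_mul hβ0.le, one_div, inv_mul_cancel₀ (by linarith : s - 1 ≠ 0),
            Real.rpow_one]
  have hkey : M + 1 ≤ c₁ * ε ^ (1-s) := by
    have h1 : ε ^ (1-s) = (ε ^ (s-1))⁻¹ := by
      rw [show (1-s) = -(s-1) by ring, Real.rpow_neg hε0.le]
    have h2 : (0:ℝ) < ε ^ (s-1) := Real.rpow_pos_of_pos hε0 _
    rw [h1]
    have h3 : β⁻¹ ≤ (ε ^ (s-1))⁻¹ := by
      apply inv_anti₀ h2 hεs
    calc M + 1 = c₁ * β⁻¹ := by rw [hβ]; field_simp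
      _ ≤ c₁ * (ε ^ (s-1))⁻¹ := by nlinarith
  have := h ε hε0 (min_le_left _ _)
  rw [hSM] at this
  have h4 : ENNReal.ofReal (M+1) ≤ ENNReal.ofReal M :=
    le_trans (ENNReal.ofReal_le_ofReal hkey) this
  rw [ENNReal.ofReal_le_ofReal_iff hM0] at h4
  linarith


noncomputable def sup1 (F : ℂ → ℂ) (e : ℝ → ℝ) : ℝ≥0∞ :=
  ⨆ r ∈ Set.Ico (0:ℝ) 1,
    ∫⁻ θ in Set.Ioc (0:ℝ) (2*π),
      ENNReal.ofReal (‖F ((r : ℂ) * Complex.exp (θ * Complex.I))‖) ^ (e θ)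

noncomputable def pexp (q₁ q₂ : ℝ) (θ : ℝ) : ℝ := q₁ + ((q₂ - q₁)/π) * |θ - π|

lemma pexp_nonneg (q₁ q₂ θ : ℝ) (h1 : 0 ≤ q₁) (h12 : q₁ ≤ q₂) : 0 ≤ pexp q₁ q₂ θ := by
  have hπ := Real.pi_pos
  have : 0 ≤ ((q₂ - q₁)/π) * |θ - π| :=
    mul_nonneg (div_nonneg (by linarith) hπ.le) (abs_nonneg _)
  unfold pexp; linarith

/-- Case 1 membership: `Fc a 0 ∈ H^q` when `a*q < 1`. -/
lemma M1 (a q : ℝ) (ha : 0 < a) (hq : 0 < q) (haq : a * q < 1) :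
    sup1 (Fc a 0) (fun _ => q) < ⊤ := by
  have hπ := Real.pi_pos
  set s : ℝ := a * q with hs
  have hs0 : 0 < s := by positivity
  set C : ℝ := (2*π) ^ s with hC
  have hC0 : 0 ≤ C := Real.rpow_nonneg (by linarith) _
  set g₁ : ℝ → ℝ≥0∞ := fun θ => ENNReal.ofReal (C * |θ - 0| ^ (-s)) with hg₁
  set g₂ : ℝ → ℝ≥0∞ := fun θ => ENNReal.ofReal (C * |θ - 2*π| ^ (-s)) with hg₂
  have hfin : (∫⁻ θ in Set.Ioc (0:ℝ) (2*π), (g₁ θ + g₂ θ)) < ⊤ := by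
    have hm : Measurable g₁ := by
      apply Measurable.ennreal_ofReal; fun_prop
    rw [lintegral_add_left hm]
    exact ENNReal.add_lt_top.2 ⟨lint_fin s 0 C haq hC0, lint_fin s (2*π) C haq hC0⟩
  apply lt_of_le_of_lt _ hfin
  unfold sup1
  apply iSup₂_le
  intro r hr
  obtain ⟨hr0, hr1⟩ := hr
  apply setLIntegral_mono_ae' measurableSet_Ioc
  have hae : ∀ᵐ θ : ℝ, θ ≠ 2*π := by
    simpa [Measure.restrict_univ] using ae_ne_restrict (2*π) Set.univ
  filter_upwards [hae] with θ hθne hθ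
  obtain ⟨hθ0, hθ2⟩ := hθ
  have hθ2' : θ < 2*π := lt_of_le_of_ne hθ2 hθne
  -- the absolute value
  have habs := Fc_abs a 0 r θ hr0 hr1
  rw [show θ + 0 = θ by ring] at habs
  rw [habs]
  set A : ℝ := ‖1 - (r:ℂ) * Complex.exp ((θ:ℂ) * I)‖ with hA
  have hApos : 0 < A := lt_of_lt_of_le (by linarith) (abs_lower_pos r θ hr0 hr1)
  set m : ℝ := min θ (2*π - θ) with hm
  have hm0 : 0 < m := lt_min hθ0 (by linarith)
  have hmA : m / (2*π) ≤ A := by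
    have h1 := abs_lower r θ hr0 hr1.le
    have h2 := sin_ge_min θ hθ0.le hθ2
    calc m / (2*π) = (m/π)/2 := by ring
      _ ≤ |Real.sin (θ/2)|/2 := by linarith
      _ ≤ A := h1
  have hXpos : 0 < A ^ (-a) := Real.rpow_pos_of_pos hApos _
  rw [ENNReal.ofReal_rpow_of_pos hXpos]
  have hchain : (A ^ (-a)) ^ q ≤ C * |θ - 0| ^ (-s) + C * |θ - 2*π| ^ (-s) := by
    have e1 : (A ^ (-a)) ^ q = A ^ (-s) := by
      rw [← Real.rpow_mul hApos.le, hs]; ring_nf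
    have e2 : A ^ (-s) ≤ (m/(2*π)) ^ (-s) :=
      Real.rpow_le_rpow_of_nonpos (by positivity) hmA (by linarith)
    have e3 : (m/(2*π)) ^ (-s) = C * m ^ (-s) := by
      rw [Real.div_rpow hm0.le (by linarith), Real.rpow_neg (by linarith : (0:ℝ) ≤ 2*π),
        div_eq_mul_inv, inv_inv, hC, mul_comm]
    have e4 : m ^ (-s) ≤ |θ - 0| ^ (-s) + |θ - 2*π| ^ (-s) := by
      rw [show θ - 0 = θ by ring, _root_.abs_of_nonneg hθ0.le,
        _root_.abs_of_nonpos (by linarith : θ - 2*π ≤ 0), neg_sub]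
      rcases min_cases θ (2*π - θ) with ⟨he, _⟩ | ⟨he, _⟩ <;> rw [hm, he]
      · have : (0:ℝ) ≤ (2*π - θ) ^ (-s) := Real.rpow_nonneg (by linarith) _
        linarith
      · have : (0:ℝ) ≤ θ ^ (-s) := Real.rpow_nonneg hθ0.le _
        linarith
    calc (A ^ (-a)) ^ q = A ^ (-s) := e1
      _ ≤ (m/(2*π)) ^ (-s) := e2
      _ = C * m ^ (-s) := e3
      _ ≤ C * (|θ - 0| ^ (-s) + |θ - 2*π| ^ (-s)) := by
          apply mul_le_mul_of_nonneg_left e4 hC0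
      _ = C * |θ - 0| ^ (-s) + C * |θ - 2*π| ^ (-s) := by ring
  calc ENNReal.ofReal ((A ^ (-a)) ^ q)
      ≤ ENNReal.ofReal (C * |θ - 0| ^ (-s) + C * |θ - 2*π| ^ (-s)) :=
        ENNReal.ofReal_le_ofReal hchain
    _ ≤ g₁ θ + g₂ θ := ENNReal.ofReal_add_le


/-- Case 2 membership: `Fc b π ∈ H^{p(·)}` when `b*q₁ < 1`. -/
lemma M2 (q₁ q₂ b : ℝ) (hq₁ : 1 ≤ q₁) (hq₁₂ : q₁ ≤ q₂) (hb : 0 < b) (hbq : b * q₁ < 1) :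
    sup1 (Fc b π) (pexp q₁ q₂) < ⊤ := by
  have hπ := Real.pi_pos
  set L : ℝ := (q₂ - q₁)/π with hL
  have hL0 : 0 ≤ L := div_nonneg (by linarith) hπ.le
  set s : ℝ := b * q₁ with hs
  have hs0 : 0 < s := by positivity
  set K : ℝ := Real.exp (b * L * (2*π)) with hK
  have hK0 : 0 < K := Real.exp_pos _
  set C : ℝ := (2*π) ^ s * K with hC
  have hC0 : 0 ≤ C := mul_nonneg (Real.rpow_nonneg (by linarith) _) hK0.le
  have hfin := lint_fin s π C hbq hC0
  apply lt_of_le_of_lt _ hfin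
  unfold sup1
  apply iSup₂_le
  intro r hr
  obtain ⟨hr0, hr1⟩ := hr
  apply setLIntegral_mono_ae' measurableSet_Ioc
  have hae : ∀ᵐ θ : ℝ, θ ≠ π := by
    simpa [Measure.restrict_univ] using ae_ne_restrict π Set.univ
  filter_upwards [hae] with θ hθne hθ
  obtain ⟨hθ0, hθ2⟩ := hθ
  have habs := Fc_abs b π r θ hr0 hr1
  rw [habs]
  set A : ℝ := ‖1 - (r:ℂ) * Complex.exp (((θ+π:ℝ):ℂ) * I)‖ with hA
  have hApos : 0 < A := lt_of_lt_of_le (by linarith) (abs_lower_pos r (θ+π) hr0 hr1)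
  set d : ℝ := |θ - π| with hd
  have hd0 : 0 < d := abs_pos.2 (sub_ne_zero.2 hθne)
  have hdπ : d ≤ π := by
    rw [hd, abs_le]; constructor <;> linarith
  have hdA : d / (2*π) ≤ A := by
    have h1 := abs_lower r (θ+π) hr0 hr1.le
    have h2 := sin_ge_dist_pi θ hθ0.le hθ2
    calc d / (2*π) = (d/π)/2 := by ring
      _ ≤ |Real.sin ((θ+π)/2)|/2 := by linarith
      _ ≤ A := h1
  have hdiv0 : 0 < d / (2*π) := by positivity
  have hdiv1 : d / (2*π) ≤ 1 := by
    rw [div_le_one (by linarith)]; linarith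
  have hXpos : 0 < A ^ (-b) := Real.rpow_pos_of_pos hApos _
  rw [ENNReal.ofReal_rpow_of_pos hXpos]
  set Y : ℝ := (d/(2*π)) ^ (-b) with hY
  have hYpos : 0 < Y := Real.rpow_pos_of_pos hdiv0 _
  have hY1 : 1 ≤ Y := Real.one_le_rpow_of_pos_of_le_one_of_nonpos hdiv0 hdiv1 (by linarith)
  have hXY : A ^ (-b) ≤ Y := Real.rpow_le_rpow_of_nonpos hdiv0 hdA (by linarith)
  have hp0 : 0 ≤ pexp q₁ q₂ θ := pexp_nonneg q₁ q₂ θ (by linarith) hq₁₂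
  have step1 : (A ^ (-b)) ^ (pexp q₁ q₂ θ) ≤ Y ^ (q₁ + L * d) := by
    have : (A ^ (-b)) ^ (pexp q₁ q₂ θ) ≤ Y ^ (pexp q₁ q₂ θ) :=
      Real.rpow_le_rpow hXpos.le hXY hp0
    refine this.trans ?_
    apply Real.rpow_le_rpow_of_exponent_le hY1
    unfold pexp
    rw [← hL, ← hd]
  have step2 : Y ^ (q₁ + L * d) = Y ^ q₁ * Y ^ (L * d) := Real.rpow_add hYpos _ _
  have step3 : Y ^ (L * d) ≤ K := by
    rw [Real.rpow_def_of_pos hYpos, hK]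
    apply Real.exp_le_exp.2
    have hlogY : Real.log Y = b * Real.log (2*π/d) := by
      rw [hY, Real.log_rpow hdiv0]
      rw [show (2*π/d) = (d/(2*π))⁻¹ by rw [inv_div], Real.log_inv]
      ring
    rw [hlogY]
    have hlog_le : Real.log (2*π/d) * d ≤ 2*π := by
      have h1 : Real.log (2*π/d) ≤ 2*π/d := by
        have := Real.log_le_sub_one_of_pos (show (0:ℝ) < 2*π/d by positivity)
        linarith
      calc Real.log (2*π/d) * d ≤ (2*π/d) * d := by nlinarith
        _ = 2*π := by field_simp
    calc b * Real.log (2*π/d) * (L * d) = (b * L) * (Real.log (2*π/d) * d) := by ring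
      _ ≤ (b * L) * (2*π) := by
          apply mul_le_mul_of_nonneg_left hlog_le (by positivity)
      _ = b * L * (2*π) := by ring
  have step4 : Y ^ q₁ = (2*π)^s * d ^ (-s) := by
    rw [hY, ← Real.rpow_mul hdiv0.le, show -b * q₁ = -s by rw [hs]; ring,
      Real.div_rpow hd0.le (by linarith : (0:ℝ) ≤ 2*π),
      Real.rpow_neg (by linarith : (0:ℝ) ≤ 2*π), div_eq_mul_inv, inv_inv, mul_comm]
  have hYq₁pos : 0 < Y ^ q₁ := Real.rpow_pos_of_pos hYpos _
  have final : (A ^ (-b)) ^ (pexp q₁ q₂ θ) ≤ C * |θ - π| ^ (-s) := by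
    calc (A ^ (-b)) ^ (pexp q₁ q₂ θ) ≤ Y ^ q₁ * Y ^ (L * d) := by rw [← step2]; exact step1
      _ ≤ Y ^ q₁ * K := mul_le_mul_of_nonneg_left step3 hYq₁pos.le
      _ = C * d ^ (-s) := by rw [step4, hC]; ring
      _ = C * |θ - π| ^ (-s) := by rw [hd]
  exact ENNReal.ofReal_le_ofReal final


/-- Case 1 divergence: `Fc a 0 ∉ H^{p(·)}` when `p ≥ q'` near `0` and `a*q' > 1`. -/
lemma D1 (q₁ q₂ a q' δ : ℝ) (hq₁ : 0 ≤ q₁) (hq₁₂ : q₁ ≤ q₂) (ha : 0 < a) (hq'0 : 0 < q')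
    (hs : 1 < a * q') (hδ : 0 < δ) (hpq' : ∀ θ : ℝ, 0 < θ → θ ≤ δ → q' ≤ pexp q₁ q₂ θ) :
    sup1 (Fc a 0) (pexp q₁ q₂) = ⊤ := by
  have hπ := Real.pi_gt_three
  set s : ℝ := a * q' with hs'
  apply div_aux _ (min δ (1/2)) (2 ^ (-s)) s (lt_min hδ (by norm_num))
    (Real.rpow_pos_of_pos (by norm_num) _) hs
  intro ε hε0 hεle
  have hεδ : ε ≤ δ := hεle.trans (min_le_left _ _)
  have hεhalf : ε ≤ 1/2 := hεle.trans (min_le_right _ _)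
  set r : ℝ := 1 - ε with hr
  have hr0 : 0 ≤ r := by rw [hr]; linarith
  have hr1 : r < 1 := by rw [hr]; linarith
  have hrmem : r ∈ Set.Ico (0:ℝ) 1 := ⟨hr0, hr1⟩
  set c : ℝ≥0∞ := ENNReal.ofReal ((2*ε) ^ (-s)) with hc
  have key : c * ENNReal.ofReal ε
      ≤ ∫⁻ θ in Set.Ioc (0:ℝ) (2*π),
          ENNReal.ofReal (‖(Fc a 0) ((r : ℂ) * Complex.exp (θ * Complex.I))‖)
            ^ (pexp q₁ q₂ θ) := by
    have hsub : Set.Ioc (0:ℝ) ε ⊆ Set.Ioc (0:ℝ) (2*π) :=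
      Set.Ioc_subset_Ioc le_rfl (by linarith)
    refine le_trans ?_ (lintegral_mono_set hsub)
    have hvol : volume (Set.Ioc (0:ℝ) ε) = ENNReal.ofReal ε := by
      rw [Real.volume_Ioc, sub_zero]
    rw [← hvol]
    calc c * volume (Set.Ioc (0:ℝ) ε) = ∫⁻ _ in Set.Ioc (0:ℝ) ε, c := by
          rw [setLIntegral_const]
      _ ≤ _ := by
          apply setLIntegral_mono' measurableSet_Ioc
          intro θ hθ
          obtain ⟨hθ0, hθε⟩ := hθ
          have habs := Fc_abs a 0 r θ hr0 hr1
          rw [show θ + 0 = θ by ring] at habs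
          rw [habs]
          set A : ℝ := ‖1 - (r:ℂ) * Complex.exp ((θ:ℂ) * I)‖ with hA
          have hApos : 0 < A := lt_of_lt_of_le (by linarith) (abs_lower_pos r θ hr0 hr1)
          have hAup : A ≤ 2*ε := by
            have h1 := abs_upper r θ hr0 hr1.le
            have h2 := sin_half_le θ
            have h3 : |θ| = θ := _root_.abs_of_nonneg hθ0.le
            rw [hr] at h1
            calc A ≤ (1 - (1-ε)) + 2 * |Real.sin (θ/2)| := h1
              _ ≤ ε + |θ| := by linarith
              _ ≤ 2*ε := by rw [h3]; linarith
          have h2ε0 : (0:ℝ) < 2*ε := by linarith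
          have h2ε1 : 2*ε ≤ 1 := by linarith
          have hXlow : (2*ε) ^ (-a) ≤ A ^ (-a) :=
            Real.rpow_le_rpow_of_nonpos hApos hAup (by linarith)
          have hX1 : (1:ℝ) ≤ A ^ (-a) :=
            le_trans (Real.one_le_rpow_of_pos_of_le_one_of_nonpos h2ε0 h2ε1 (by linarith)) hXlow
          have hXpos : 0 < A ^ (-a) := by linarith
          rw [ENNReal.ofReal_rpow_of_pos hXpos]
          rw [hc]
          apply ENNReal.ofReal_le_ofReal
          have hqp : q' ≤ pexp q₁ q₂ θ := hpq' θ hθ0 (hθε.trans hεδ)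
          calc (2*ε) ^ (-s) = ((2*ε) ^ (-a)) ^ q' := by
                rw [← Real.rpow_mul h2ε0.le, show -a * q' = -s by rw [hs']; ring]
            _ ≤ (A ^ (-a)) ^ q' :=
                Real.rpow_le_rpow (Real.rpow_nonneg h2ε0.le _) hXlow hq'0.le
            _ ≤ (A ^ (-a)) ^ (pexp q₁ q₂ θ) :=
                Real.rpow_le_rpow_of_exponent_le hX1 hqp
  have hfinal : ENNReal.ofReal (2 ^ (-s) * ε ^ (1 - s))
      ≤ sup1 (Fc a 0) (pexp q₁ q₂) := by
    have heq : (2:ℝ) ^ (-s) * ε ^ (1 - s) = (2*ε) ^ (-s) * ε := by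
      rw [Real.mul_rpow (by norm_num : (0:ℝ) ≤ 2) hε0.le,
        show (1 - s) = -s + 1 by ring, Real.rpow_add hε0, Real.rpow_one]
      ring
    rw [heq, ENNReal.ofReal_mul (Real.rpow_nonneg (by linarith) _)]
    refine le_trans key ?_
    unfold sup1
    exact le_biSup (f := fun r : ℝ => ∫⁻ θ in Set.Ioc (0:ℝ) (2*π),
      ENNReal.ofReal (‖(Fc a 0) ((r : ℂ) * Complex.exp (θ * Complex.I))‖)
        ^ (pexp q₁ q₂ θ)) hrmem
  exact hfinal

/-- Case 2 divergence: `Fc b π ∉ H^{q₂}` when `b*q₂ > 1`. -/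
lemma D2 (q₂ b : ℝ) (hb : 0 < b) (hq₂0 : 0 ≤ q₂) (hs : 1 < b * q₂) :
    sup1 (Fc b π) (fun _ => q₂) = ⊤ := by
  have hπ := Real.pi_gt_three
  set s : ℝ := b * q₂ with hs'
  apply div_aux _ (1/2) (2 ^ (-s)) s (by norm_num)
    (Real.rpow_pos_of_pos (by norm_num) _) hs
  intro ε hε0 hεhalf
  set r : ℝ := 1 - ε with hr
  have hr0 : 0 ≤ r := by rw [hr]; linarith
  have hr1 : r < 1 := by rw [hr]; linarith
  have hrmem : r ∈ Set.Ico (0:ℝ) 1 := ⟨hr0, hr1⟩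
  set c : ℝ≥0∞ := ENNReal.ofReal ((2*ε) ^ (-s)) with hc
  have key : c * ENNReal.ofReal ε
      ≤ ∫⁻ θ in Set.Ioc (0:ℝ) (2*π),
          ENNReal.ofReal (‖(Fc b π) ((r : ℂ) * Complex.exp (θ * Complex.I))‖)
            ^ q₂ := by
    have hsub : Set.Ioc π (π+ε) ⊆ Set.Ioc (0:ℝ) (2*π) :=
      Set.Ioc_subset_Ioc (by linarith) (by linarith)
    refine le_trans ?_ (lintegral_mono_set hsub)
    have hvol : volume (Set.Ioc π (π+ε)) = ENNReal.ofReal ε := by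
      rw [Real.volume_Ioc, show π + ε - π = ε by ring]
    rw [← hvol]
    calc c * volume (Set.Ioc π (π+ε)) = ∫⁻ _ in Set.Ioc π (π+ε), c := by
          rw [setLIntegral_const]
      _ ≤ _ := by
          apply setLIntegral_mono' measurableSet_Ioc
          intro θ hθ
          obtain ⟨hθ0, hθε⟩ := hθ
          have habs := Fc_abs b π r θ hr0 hr1
          rw [habs]
          set A : ℝ := ‖1 - (r:ℂ) * Complex.exp (((θ+π:ℝ):ℂ) * I)‖ with hA
          have hApos : 0 < A := lt_of_lt_of_le (by linarith) (abs_lower_pos r (θ+π) hr0 hr1)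
          have hAup : A ≤ 2*ε := by
            have h1 := abs_upper r (θ+π) hr0 hr1.le
            have h2 : |Real.sin ((θ+π)/2)| ≤ |π - θ|/2 := by
              rw [sin_shift_pi]
              have := sin_half_le (π - θ)
              linarith
            have h3 : |π - θ| = θ - π := by
              rw [_root_.abs_of_nonpos (by linarith), neg_sub]
            rw [hr] at h1
            calc A ≤ (1 - (1-ε)) + 2 * |Real.sin ((θ+π)/2)| := h1
              _ ≤ ε + |π - θ| := by linarith
              _ ≤ 2*ε := by rw [h3]; linarith
          have h2ε0 : (0:ℝ) < 2*ε := by linarith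
          have hXlow : (2*ε) ^ (-b) ≤ A ^ (-b) :=
            Real.rpow_le_rpow_of_nonpos hApos hAup (by linarith)
          have hXpos : 0 < A ^ (-b) := Real.rpow_pos_of_pos hApos _
          rw [ENNReal.ofReal_rpow_of_pos hXpos]
          rw [hc]
          apply ENNReal.ofReal_le_ofReal
          calc (2*ε) ^ (-s) = ((2*ε) ^ (-b)) ^ q₂ := by
                rw [← Real.rpow_mul h2ε0.le, show -b * q₂ = -s by rw [hs']; ring]
            _ ≤ (A ^ (-b)) ^ q₂ :=
                Real.rpow_le_rpow (Real.rpow_nonneg h2ε0.le _) hXlow hq₂0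
  have heq : (2:ℝ) ^ (-s) * ε ^ (1 - s) = (2*ε) ^ (-s) * ε := by
    rw [Real.mul_rpow (by norm_num : (0:ℝ) ≤ 2) hε0.le,
      show (1 - s) = -s + 1 by ring, Real.rpow_add hε0, Real.rpow_one]
    ring
  rw [heq, ENNReal.ofReal_mul (Real.rpow_nonneg (by linarith) _)]
  refine le_trans key ?_
  unfold sup1
  exact le_biSup (f := fun r : ℝ => ∫⁻ θ in Set.Ioc (0:ℝ) (2*π),
    ENNReal.ofReal (‖(Fc b π) ((r : ℂ) * Complex.exp (θ * Complex.I))‖)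
      ^ q₂) hrmem

end Stmt13Aux

open Stmt13Aux

/-- for `1 < q₁ < q₂ < ∞` there exists a log-Hölder continuous exponent
`p : [0,2π] → [q₁,q₂]` with `p(0) = p(2π)` such that `H^{p(·)}(𝔻) ≠ H^q(𝔻)` for every
constant exponent `q ∈ [q₁,q₂]`. -/
theorem stmt13 (q₁ q₂ : ℝ) (h1 : 1 < q₁) (h12 : q₁ < q₂) :
    ∃ p : ℝ → ℝ,
      (∀ θ ∈ Set.Icc (0:ℝ) (2*Real.pi), p θ ∈ Set.Icc q₁ q₂) ∧
      p 0 = p (2*Real.pi) ∧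
      (∃ Clog : ℝ, 0 < Clog ∧ ∀ x ∈ Set.Icc (0:ℝ) (2*Real.pi),
        ∀ y ∈ Set.Icc (0:ℝ) (2*Real.pi), 0 < |x - y| → |x - y| < 1/2 →
          |p x - p y| ≤ Clog / Real.log (1/|x - y|)) ∧
      ∀ q : ℝ, q₁ ≤ q → q ≤ q₂ →
        {F : ℂ → ℂ | DifferentiableOn ℂ F (Metric.ball 0 1) ∧
          (⨆ r ∈ Set.Ico (0:ℝ) 1,
            ∫⁻ θ in Set.Ioc (0:ℝ) (2*Real.pi),
              ENNReal.ofReal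
                (‖F ((r : ℂ) * Complex.exp (θ * Complex.I))‖) ^ (p θ)) < ⊤}
        ≠
        {F : ℂ → ℂ | DifferentiableOn ℂ F (Metric.ball 0 1) ∧
          (⨆ r ∈ Set.Ico (0:ℝ) 1,
            ∫⁻ θ in Set.Ioc (0:ℝ) (2*Real.pi),
              ENNReal.ofReal
                (‖F ((r : ℂ) * Complex.exp (θ * Complex.I))‖) ^ q) < ⊤} := by
  have hπ := Real.pi_gt_three
  have hπ0 := Real.pi_pos
  set L : ℝ := (q₂ - q₁)/Real.pi with hL
  have hL0 : 0 < L := div_pos (by linarith) hπ0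
  have hLπ : L * Real.pi = q₂ - q₁ := by rw [hL]; field_simp
  refine ⟨pexp q₁ q₂, ?_, ?_, ?_, ?_⟩
  · -- range
    intro θ hθ
    obtain ⟨hθ0, hθ2⟩ := hθ
    have habs : |θ - Real.pi| ≤ Real.pi := abs_le.2 ⟨by linarith, by linarith⟩
    have h0 : 0 ≤ L * |θ - Real.pi| := mul_nonneg hL0.le (abs_nonneg _)
    have h1' : L * |θ - Real.pi| ≤ q₂ - q₁ := by
      calc L * |θ - Real.pi| ≤ L * Real.pi := by nlinarith
        _ = q₂ - q₁ := hLπ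
    exact ⟨by unfold pexp; rw [← hL]; linarith, by unfold pexp; rw [← hL]; linarith⟩
  · -- periodicity
    unfold pexp
    rw [show (0:ℝ) - Real.pi = -Real.pi by ring, abs_neg,
      show 2*Real.pi - Real.pi = Real.pi by ring]
  · -- log-Hölder
    refine ⟨L, hL0, ?_⟩
    intro x hx y hy habs0 habs12
    set t : ℝ := |x - y| with ht
    have hlogpos : 0 < Real.log (1/t) := Real.log_pos (by
      rw [lt_div_iff₀ habs0]; linarith)
    have hpp : |pexp q₁ q₂ x - pexp q₁ q₂ y| ≤ L * t := by
      unfold pexp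
      rw [show q₁ + L * |x - Real.pi| - (q₁ + L * |y - Real.pi|)
            = L * (|x - Real.pi| - |y - Real.pi|) by ring, abs_mul,
        _root_.abs_of_nonneg hL0.le]
      have h2 : |(|x - Real.pi| - |y - Real.pi|)| ≤ |x - y| := by
        have := abs_abs_sub_abs_le_abs_sub (x - Real.pi) (y - Real.pi)
        rwa [show x - Real.pi - (y - Real.pi) = x - y by ring] at this
      nlinarith
    refine hpp.trans ?_
    rw [le_div_iff₀ hlogpos]
    have hlog_le : Real.log (1/t) ≤ 1/t := by
      have := Real.log_le_sub_one_of_pos (show (0:ℝ) < 1/t by positivity)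
      linarith
    have : t * Real.log (1/t) ≤ 1 := by
      calc t * Real.log (1/t) ≤ t * (1/t) := by nlinarith
        _ = 1 := by field_simp
    nlinarith
  · -- the main inequality of Hardy spaces
    intro q hq₁q hqq₂
    have hq0 : 0 < q := by linarith
    rcases lt_or_eq_of_le hqq₂ with hqlt | hqeq
    · -- q < q₂ : use Fc a 0
      set a : ℝ := (1/q₂ + 1/q)/2 with ha'
      have hq₂0 : (0:ℝ) < q₂ := by linarith
      have hinv : 1/q₂ < 1/q := by
        apply one_div_lt_one_div_of_lt hq0 hqlt
      have ha : 0 < a := by rw [ha']; positivity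
      have haq : a * q < 1 := by
        have : a < 1/q := by rw [ha']; linarith
        calc a * q < (1/q) * q := by nlinarith
          _ = 1 := by field_simp
      have haq₂ : 1 < a * q₂ := by
        have h2 : 1/q₂ < a := by rw [ha']; linarith
        calc 1 = (1/q₂) * q₂ := by field_simp
          _ < a * q₂ := by nlinarith
      set q' : ℝ := (1/a + q₂)/2 with hq''
      have hinva : 1/a < q₂ := by
        rw [div_lt_iff₀ ha]
        calc 1 < a * q₂ := haq₂
          _ = q₂ * a := by ring
      have hq'0 : 0 < q' := by rw [hq'']; positivity
      have haq' : 1 < a * q' := by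
        have h3 : 1/a < q' := by rw [hq'']; linarith
        calc 1 = a * (1/a) := by field_simp
          _ < a * q' := by nlinarith
      have hq'q₂ : q' < q₂ := by rw [hq'']; linarith
      set δ : ℝ := min ((q₂ - q')/L) Real.pi with hδ'
      have hδ : 0 < δ := lt_min (div_pos (by linarith) hL0) hπ0
      have hpq' : ∀ θ : ℝ, 0 < θ → θ ≤ δ → q' ≤ pexp q₁ q₂ θ := by
        intro θ hθ0 hθδ
        have hθπ : θ ≤ Real.pi := hθδ.trans (min_le_right _ _)
        have hθδ' : θ ≤ (q₂ - q')/L := hθδ.trans (min_le_left _ _)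
        have hLθ : L * θ ≤ q₂ - q' := by
          rw [le_div_iff₀ hL0] at hθδ'
          linarith [hθδ']
        unfold pexp
        rw [← hL, _root_.abs_of_nonpos (by linarith), neg_sub]
        nlinarith
      -- membership facts
      have hmem : Fc a 0 ∈ {F : ℂ → ℂ | DifferentiableOn ℂ F (Metric.ball 0 1) ∧
          (⨆ r ∈ Set.Ico (0:ℝ) 1,
            ∫⁻ θ in Set.Ioc (0:ℝ) (2*Real.pi),
              ENNReal.ofReal
                (‖F ((r : ℂ) * Complex.exp (θ * Complex.I))‖) ^ q) < ⊤} := by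
        refine ⟨Fc_diff a 0, ?_⟩
        have := M1 a q ha hq0 haq
        unfold sup1 at this
        exact this
      have hnmem : Fc a 0 ∉ {F : ℂ → ℂ | DifferentiableOn ℂ F (Metric.ball 0 1) ∧
          (⨆ r ∈ Set.Ico (0:ℝ) 1,
            ∫⁻ θ in Set.Ioc (0:ℝ) (2*Real.pi),
              ENNReal.ofReal
                (‖F ((r : ℂ) * Complex.exp (θ * Complex.I))‖) ^ (pexp q₁ q₂ θ)) < ⊤} := by
        rintro ⟨-, hlt⟩
        have htop := D1 q₁ q₂ a q' δ (by linarith) h12.le ha hq'0 haq' hδ hpq'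
        unfold sup1 at htop
        rw [htop] at hlt
        exact lt_irrefl _ hlt
      intro hset
      rw [hset] at hnmem
      exact hnmem hmem
    · -- q = q₂ : use Fc b π
      subst hqeq
      set b : ℝ := (1/q + 1/q₁)/2 with hb'
      have hq₁0 : (0:ℝ) < q₁ := by linarith
      have hinv : 1/q < 1/q₁ := one_div_lt_one_div_of_lt hq₁0 h12
      have hb : 0 < b := by rw [hb']; positivity
      have hbq₁ : b * q₁ < 1 := by
        have : b < 1/q₁ := by rw [hb']; linarith
        calc b * q₁ < (1/q₁) * q₁ := by nlinarith
          _ = 1 := by field_simp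
      have hbq : 1 < b * q := by
        have h2 : 1/q < b := by rw [hb']; linarith
        calc 1 = (1/q) * q := by field_simp
          _ < b * q := by nlinarith
      have hmem : Fc b Real.pi ∈ {F : ℂ → ℂ | DifferentiableOn ℂ F (Metric.ball 0 1) ∧
          (⨆ r ∈ Set.Ico (0:ℝ) 1,
            ∫⁻ θ in Set.Ioc (0:ℝ) (2*Real.pi),
              ENNReal.ofReal
                (‖F ((r : ℂ) * Complex.exp (θ * Complex.I))‖) ^ (pexp q₁ q θ)) < ⊤} := by
        refine ⟨Fc_diff b Real.pi, ?_⟩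
        have := M2 q₁ q b h1.le h12.le hb hbq₁
        unfold sup1 at this
        exact this
      have hnmem : Fc b Real.pi ∉ {F : ℂ → ℂ | DifferentiableOn ℂ F (Metric.ball 0 1) ∧
          (⨆ r ∈ Set.Ico (0:ℝ) 1,
            ∫⁻ θ in Set.Ioc (0:ℝ) (2*Real.pi),
              ENNReal.ofReal
                (‖F ((r : ℂ) * Complex.exp (θ * Complex.I))‖) ^ q) < ⊤} := by
        rintro ⟨-, hlt⟩
        have htop := D2 q b hb hq0.le hbq
        unfold sup1 at htop
        rw [htop] at hlt
        exact lt_irrefl _ hlt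
      intro hset
      rw [hset] at hmem
      exact hnmem hmem
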